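/- For the twisted two-term complex 0 → A → Ω¹_{A/k} → 0 on the punctured elliptic curve with twisting parameter ω = dx/y, the zeroth twisted cohomology H⁰_ω(X/k) = ker(d_ω: A → Ω¹) is zero: for f ∈ A, the equation df + f·ω = 0 forces f = 0. -/

import Mathlib

set_option maxHeartbeats 1000000
set_option synthInstance.maxHeartbeats 400000

section
open MvPolynomial

/-- The defining relation `y² - (4x³ - g₂ x - g₃)` of the (affine) elliptic curve. -/
noncomputable abbrev ellipticRel (k : Type*) [CommRing k] (g₂ g₃ : k) :
    MvPolynomial (Fin 2) k :=
  X 1 ^ 2 - (4 * X 0 ^ 3 - C g₂ * X 0 - C g₃)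

/-- The affine coordinate ring `A = k[x,y]/(y² - (4x³ - g₂x - g₃))`. -/
abbrev EllipticRing (k : Type*) [CommRing k] (g₂ g₃ : k) : Type _ :=
  MvPolynomial (Fin 2) k ⧸ Ideal.span {ellipticRel k g₂ g₃}

end

namespace EllipticAux

open Polynomial


variable {k : Type*} [Field k] [CharZero k]

noncomputable def F (g₂ g₃ : k) : k[X] := C 4 * X ^ 3 - C g₂ * X - C g₃

lemma F_natDegree (g₂ g₃ : k) : (F g₂ g₃).natDegree = 3 := by
  unfold F; compute_degree!

omit [CharZero k] in
lemma F_coeff3 (g₂ g₃ : k) : (F g₂ g₃).coeff 3 = 4 := by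
  simp [F, coeff_X, coeff_C]

lemma F_leadingCoeff (g₂ g₃ : k) : (F g₂ g₃).leadingCoeff = 4 := by
  rw [leadingCoeff, F_natDegree]; exact F_coeff3 g₂ g₃

lemma F_ne_zero (g₂ g₃ : k) : F g₂ g₃ ≠ 0 := by
  intro h
  have := F_coeff3 g₂ g₃
  rw [h, coeff_zero] at this
  norm_num at this

omit [CharZero k] in
lemma derivF (g₂ g₃ : k) : derivative (F g₂ g₃) = C 12 * X ^ 2 - C g₂ := by
  simp [F]
  rw [show (C (12:k)) = C 4 * C 3 by rw [← C_mul]; norm_num]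
  rw [show (C (3:k)) = C 2 + 1 by rw [← C_1, ← C_add]; norm_num]
  ring

lemma derivF_natDegree (g₂ g₃ : k) : (derivative (F g₂ g₃)).natDegree = 2 := by
  rw [derivF]; compute_degree!

lemma derivF_coeff2 (g₂ g₃ : k) : (derivative (F g₂ g₃)).coeff 2 = 12 := by
  rw [derivF]; simp [coeff_C]

lemma derivF_leadingCoeff (g₂ g₃ : k) : (derivative (F g₂ g₃)).leadingCoeff = 12 := by
  rw [leadingCoeff, derivF_natDegree]; exact derivF_coeff2 g₂ g₃

lemma derivF_ne_zero (g₂ g₃ : k) : derivative (F g₂ g₃) ≠ 0 := by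
  intro h
  have := derivF_coeff2 g₂ g₃
  rw [h, coeff_zero] at this
  norm_num at this

lemma deriv_natDegree {p : k[X]} (hp : p.natDegree ≠ 0) :
    (derivative p).natDegree = p.natDegree - 1 := by
  refine le_antisymm (natDegree_derivative_le p) (le_natDegree_of_ne_zero ?_)
  have e : p.natDegree - 1 + 1 = p.natDegree := by omega
  rw [coeff_derivative, e]
  have hp0 : p ≠ 0 := fun h => hp (by simp [h])
  have h1 : p.coeff p.natDegree ≠ 0 := leadingCoeff_ne_zero.mpr hp0
  have h2 : ((p.natDegree - 1 : ℕ) : k) + 1 ≠ 0 := by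
    have : (((p.natDegree - 1) + 1 : ℕ) : k) ≠ 0 := Nat.cast_ne_zero.mpr (by omega)
    push_cast at this; exact this
  exact mul_ne_zero h1 h2

lemma ode (g₂ g₃ : k) (a : k[X])
    (h : C 2 * a = C 2 * derivative (derivative a) * F g₂ g₃
        + derivative a * derivative (F g₂ g₃)) : a = 0 := by
  by_contra ha
  have hc : a.coeff a.natDegree ≠ 0 := leadingCoeff_ne_zero.mpr ha
  by_cases h1 : derivative a = 0
  · rw [h1] at h
    simp only [derivative_zero, mul_zero, zero_mul, add_zero, zero_add] at h
    have := congrArg (fun p => coeff p a.natDegree) h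
    simp only [coeff_C_mul, coeff_zero] at this
    exact hc (by simpa using (mul_eq_zero.mp this).resolve_left (by norm_num))
  have hn : a.natDegree ≠ 0 := fun h0 => h1 (by rw [eq_C_of_natDegree_eq_zero h0]; simp)
  have hd1 : (derivative a).natDegree = a.natDegree - 1 := deriv_natDegree hn
  by_cases h2 : derivative (derivative a) = 0
  · have hd0 : (derivative a).natDegree = 0 := natDegree_eq_zero_of_derivative_eq_zero h2
    rw [h2] at h
    simp only [mul_zero, zero_mul, zero_add] at h
    have hdeg : (C 2 * a).natDegree = (derivative a * derivative (F g₂ g₃)).natDegree := by rw [h]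
    rw [natDegree_C_mul (by norm_num : (2:k) ≠ 0),
      natDegree_mul h1 (derivF_ne_zero g₂ g₃), hd0, derivF_natDegree] at hdeg
    omega
  · have hn2 : (derivative a).natDegree ≠ 0 := fun h0 => h2 (by
      rw [eq_C_of_natDegree_eq_zero h0]; simp)
    have hd2 : (derivative (derivative a)).natDegree = (derivative a).natDegree - 1 :=
      deriv_natDegree hn2
    obtain ⟨m, hm⟩ : ∃ m, a.natDegree = m + 2 := ⟨a.natDegree - 2, by omega⟩
    set c := a.coeff a.natDegree with hcdef
    have key := congrArg (fun p => coeff p (a.natDegree + 1)) h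
    rw [coeff_C_mul, coeff_eq_zero_of_natDegree_lt (by omega : a.natDegree < a.natDegree + 1),
      mul_zero, coeff_add] at key
    have e1 : coeff (C 2 * derivative (derivative a) * F g₂ g₃) (a.natDegree + 1)
        = 2 * (c * ((m:k) + 2) * ((m:k) + 1)) * 4 := by
      have hdd : (C 2 * derivative (derivative a)).natDegree = m := by
        rw [natDegree_C_mul (by norm_num : (2:k) ≠ 0), hd2, hd1]; omega
      have hidx : a.natDegree + 1 = (C 2 * derivative (derivative a)).natDegree
          + (F g₂ g₃).natDegree := by rw [hdd, F_natDegree]; omega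
      rw [hidx, coeff_mul_degree_add_degree, F_leadingCoeff]
      rw [leadingCoeff, hdd, coeff_C_mul]
      have i1 : m + 1 + 1 = a.natDegree := by omega
      rw [coeff_derivative, coeff_derivative, i1, ← hcdef]
      push_cast
      ring
    have e2 : coeff (derivative a * derivative (F g₂ g₃)) (a.natDegree + 1)
        = (c * ((m:k) + 2)) * 12 := by
      have hidx : a.natDegree + 1 = (derivative a).natDegree
          + (derivative (F g₂ g₃)).natDegree := by rw [hd1, derivF_natDegree]; omega
      rw [hidx, coeff_mul_degree_add_degree, derivF_leadingCoeff]
      rw [leadingCoeff, hd1]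
      have i1 : a.natDegree - 1 + 1 = a.natDegree := by omega
      rw [coeff_derivative, i1, ← hcdef]
      have i2 : ((a.natDegree - 1 : ℕ) : k) = (m:k) + 1 := by
        rw [show a.natDegree - 1 = m + 1 by omega]; push_cast; ring
      rw [i2]
      push_cast
      ring
    rw [e1, e2] at key
    have hzero : c * (((m:k) + 2) * (8 * (m:k) + 20)) = 0 := by linear_combination -key
    rcases mul_eq_zero.mp hzero with h' | h'
    · exact hc h'
    rcases mul_eq_zero.mp h' with h' | h'
    · have : ((m + 2 : ℕ) : k) ≠ 0 := Nat.cast_ne_zero.mpr (by omega)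
      push_cast at this; exact this h'
    · have : ((8 * m + 20 : ℕ) : k) ≠ 0 := Nat.cast_ne_zero.mpr (by omega)
      push_cast at this; exact this h'




open Polynomial

variable {k : Type*} [Field k] [CharZero k]

noncomputable def q (g₂ g₃ : k) : Polynomial (Polynomial k) := X ^ 2 - C (F g₂ g₃)

omit [CharZero k] in
lemma q_monic (g₂ g₃ : k) : (q g₂ g₃).Monic :=
  monic_X_pow_sub (lt_of_le_of_lt degree_C_le (by exact_mod_cast Nat.zero_lt_two))

omit [CharZero k] in
lemma q_degree (g₂ g₃ : k) : (q g₂ g₃).degree = 2 := by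
  unfold q; compute_degree!

omit [CharZero k] in
lemma root_sq (g₂ g₃ : k) :
    (AdjoinRoot.root (q g₂ g₃)) ^ 2 = AdjoinRoot.of (q g₂ g₃) (F g₂ g₃) := by
  have h := AdjoinRoot.eval₂_root (q g₂ g₃)
  unfold q at h ⊢
  rw [eval₂_sub, eval₂_pow, eval₂_X, eval₂_C, sub_eq_zero] at h
  exact h

omit [CharZero k] in
lemma AR_rep (g₂ g₃ : k) (z : AdjoinRoot (q g₂ g₃)) :
    ∃ a b : k[X], z = AdjoinRoot.of (q g₂ g₃) a + AdjoinRoot.of (q g₂ g₃) b * AdjoinRoot.root (q g₂ g₃) := by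
  obtain ⟨p, rfl⟩ := AdjoinRoot.mk_surjective z
  set r := p %ₘ q g₂ g₃ with hr
  refine ⟨r.coeff 0, r.coeff 1, ?_⟩
  have h1 : AdjoinRoot.mk (q g₂ g₃) p = AdjoinRoot.mk (q g₂ g₃) r := by
    conv_lhs => rw [← modByMonic_add_div p (q g₂ g₃)]
    rw [map_add, map_mul, AdjoinRoot.mk_self, zero_mul, add_zero]
  have hr1 : r.natDegree ≤ 1 := by
    by_cases h0 : r = 0
    · simp [h0]
    have := (natDegree_lt_iff_degree_lt (n := 2) h0).mpr
      (by have := degree_modByMonic_lt p (q_monic g₂ g₃); rwa [q_degree g₂ g₃] at this)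
    omega
  rw [h1]
  conv_lhs => rw [eq_X_add_C_of_natDegree_le_one hr1]
  rw [map_add, map_mul, AdjoinRoot.mk_C, AdjoinRoot.mk_C, AdjoinRoot.mk_X]
  ring

omit [CharZero k] in
lemma AR_rep_zero (g₂ g₃ : k) {a b : k[X]}
    (h : AdjoinRoot.of (q g₂ g₃) a + AdjoinRoot.of (q g₂ g₃) b * AdjoinRoot.root (q g₂ g₃) = 0) : a = 0 ∧ b = 0 := by
  have hmk : AdjoinRoot.mk (q g₂ g₃) (C a + C b * X) = 0 := by
    rw [map_add, map_mul, AdjoinRoot.mk_C, AdjoinRoot.mk_C, AdjoinRoot.mk_X]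
    exact h
  have hdvd := (AdjoinRoot.mk_eq_zero).mp hmk
  have hz : C a + C b * X = 0 := by
    refine eq_zero_of_dvd_of_degree_lt hdvd ?_
    rw [q_degree]
    refine lt_of_le_of_lt ?_ (by exact_mod_cast Nat.one_lt_two : (1 : WithBot ℕ) < 2)
    apply le_trans (degree_add_le _ _)
    simp only [sup_le_iff]
    constructor
    · exact le_trans degree_C_le (by norm_num)
    · exact le_trans (degree_mul_le _ _) (by
        simpa using add_le_add degree_C_le (le_refl (degree (X : (k[X])[X]))))
  constructor
  · have := congrArg (fun p => coeff p 0) hz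
    simpa using this
  · have := congrArg (fun p => coeff p 1) hz
    simpa [coeff_C] using this

lemma F_ne_zero' (g₂ g₃ : k) : F g₂ g₃ ≠ 0 := by
  intro h
  have : (F g₂ g₃).coeff 3 = 4 := by simp [F, coeff_X, coeff_C]
  rw [h, coeff_zero] at this
  norm_num at this

lemma root_reg (g₂ g₃ : k) {z : AdjoinRoot (q g₂ g₃)}
    (h : AdjoinRoot.root (q g₂ g₃) * z = 0) : z = 0 := by
  obtain ⟨a, b, rfl⟩ := AR_rep g₂ g₃ z
  have h2 : AdjoinRoot.of (q g₂ g₃) (F g₂ g₃) * AdjoinRoot.of (q g₂ g₃) b + AdjoinRoot.of (q g₂ g₃) a * AdjoinRoot.root (q g₂ g₃) = 0 := by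
    rw [← h]
    have hsq := root_sq g₂ g₃
    linear_combination -((AdjoinRoot.of (q g₂ g₃)) b) * hsq
  rw [← map_mul] at h2
  obtain ⟨hFb, ha⟩ := AR_rep_zero g₂ g₃ h2
  have hb : b = 0 := by
    rcases mul_eq_zero.mp hFb with h' | h'
    · exact absurd h' (F_ne_zero' g₂ g₃)
    · exact h'
  rw [ha, hb]
  simp


end EllipticAux

open MvPolynomial


namespace EllipticAux

variable {k : Type*} [Field k] [CharZero k]

variable (g₂ g₃ : k)

noncomputable def xbar : EllipticRing k g₂ g₃ :=
  Ideal.Quotient.mk (Ideal.span {ellipticRel k g₂ g₃}) (X 0)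

noncomputable def ybar : EllipticRing k g₂ g₃ :=
  Ideal.Quotient.mk (Ideal.span {ellipticRel k g₂ g₃}) (X 1)

lemma aeval_rel :
    (aeval ![AdjoinRoot.of (q g₂ g₃) Polynomial.X, AdjoinRoot.root (q g₂ g₃)])
      (ellipticRel k g₂ g₃) = 0 := by
  have hsq := root_sq g₂ g₃
  simp only [ellipticRel, map_sub, map_mul, map_pow, aeval_X, MvPolynomial.aeval_C,
    Matrix.cons_val_zero, Matrix.cons_val_one, Matrix.head_cons, map_ofNat,
    AdjoinRoot.algebraMap_eq', RingHom.comp_apply, Polynomial.algebraMap_eq]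
  rw [F] at hsq
  push_cast [map_sub, map_mul, map_pow, map_ofNat] at hsq
  linear_combination hsq

noncomputable def ψ : EllipticRing k g₂ g₃ →ₐ[k] AdjoinRoot (q g₂ g₃) :=
  Ideal.Quotient.liftₐ _
    (aeval ![AdjoinRoot.of (q g₂ g₃) Polynomial.X, AdjoinRoot.root (q g₂ g₃)]) (by
      intro p hp
      rw [Ideal.mem_span_singleton] at hp
      obtain ⟨c, rfl⟩ := hp
      rw [map_mul, aeval_rel, zero_mul])

lemma psi_mk (p : MvPolynomial (Fin 2) k) :
    ψ g₂ g₃ (Ideal.Quotient.mk (Ideal.span {ellipticRel k g₂ g₃}) p)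
      = aeval ![AdjoinRoot.of (q g₂ g₃) Polynomial.X, AdjoinRoot.root (q g₂ g₃)] p := by
  simp [ψ, Ideal.Quotient.liftₐ_apply, Ideal.Quotient.lift_mk]
  rfl


lemma mk_rel_zero :
    Ideal.Quotient.mk (Ideal.span {ellipticRel k g₂ g₃}) (ellipticRel k g₂ g₃) = 0 :=
  Ideal.Quotient.eq_zero_iff_mem.mpr (Ideal.subset_span rfl)

omit [CharZero k] in
lemma mk_C (c : k) : Ideal.Quotient.mk (Ideal.span {ellipticRel k g₂ g₃}) (MvPolynomial.C c)
    = algebraMap k (EllipticRing k g₂ g₃) c := rfl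

lemma hy2 : (ybar g₂ g₃) ^ 2 = Polynomial.aeval (xbar g₂ g₃) (F g₂ g₃) := by
  have h0 := mk_rel_zero g₂ g₃
  simp only [ellipticRel, map_sub, map_mul, map_pow, map_ofNat, mk_C] at h0
  rw [sub_eq_zero] at h0
  rw [F]
  simp only [map_sub, map_mul, map_pow, Polynomial.aeval_X, Polynomial.aeval_C, map_ofNat]
  rw [xbar, ybar, h0]

noncomputable def φ : AdjoinRoot (q g₂ g₃) →+* EllipticRing k g₂ g₃ :=
  AdjoinRoot.lift (Polynomial.aeval (xbar g₂ g₃)).toRingHom (ybar g₂ g₃) (by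
    rw [q, Polynomial.eval₂_sub, Polynomial.eval₂_pow, Polynomial.eval₂_X, Polynomial.eval₂_C,
      sub_eq_zero]
    exact hy2 g₂ g₃)

lemma phi_of (a : Polynomial k) :
    φ g₂ g₃ (AdjoinRoot.of (q g₂ g₃) a) = Polynomial.aeval (xbar g₂ g₃) a :=
  AdjoinRoot.lift_of _

lemma phi_root : φ g₂ g₃ (AdjoinRoot.root (q g₂ g₃)) = ybar g₂ g₃ :=
  AdjoinRoot.lift_root _

lemma phi_psi (g : EllipticRing k g₂ g₃) : φ g₂ g₃ (ψ g₂ g₃ g) = g := by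
  have hcomp : (φ g₂ g₃).comp (ψ g₂ g₃ : EllipticRing k g₂ g₃ →+* AdjoinRoot (q g₂ g₃))
      = RingHom.id _ := by
    apply Ideal.Quotient.ringHom_ext
    apply MvPolynomial.ringHom_ext
    · intro c
      simp only [RingHom.comp_apply, RingHom.coe_coe, RingHom.id_apply]
      rw [psi_mk, MvPolynomial.aeval_C, AdjoinRoot.algebraMap_eq', RingHom.comp_apply,
        Polynomial.algebraMap_eq, phi_of, Polynomial.aeval_C]
      rfl
    · intro i
      simp only [RingHom.comp_apply, RingHom.coe_coe, RingHom.id_apply]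
      rw [psi_mk, aeval_X]
      fin_cases i
      · show φ g₂ g₃ (AdjoinRoot.of (q g₂ g₃) Polynomial.X) = _
        rw [phi_of, Polynomial.aeval_X]
        rfl
      · show φ g₂ g₃ (AdjoinRoot.root (q g₂ g₃)) = _
        rw [phi_root]
        rfl
  simpa using RingHom.congr_fun hcomp g

lemma A_rep (g : EllipticRing k g₂ g₃) : ∃ a b : Polynomial k,
    g = Polynomial.aeval (xbar g₂ g₃) a + Polynomial.aeval (xbar g₂ g₃) b * ybar g₂ g₃ := by
  obtain ⟨a, b, hab⟩ := AR_rep g₂ g₃ (ψ g₂ g₃ g)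
  refine ⟨a, b, ?_⟩
  have h := congrArg (φ g₂ g₃) hab
  rw [phi_psi] at h
  rw [h, map_add, map_mul, phi_of, phi_of, phi_root]

lemma psi_xbar : ψ g₂ g₃ (xbar g₂ g₃) = AdjoinRoot.of (q g₂ g₃) Polynomial.X := by
  rw [xbar, psi_mk, aeval_X]; rfl

lemma psi_ybar : ψ g₂ g₃ (ybar g₂ g₃) = AdjoinRoot.root (q g₂ g₃) := by
  rw [ybar, psi_mk, aeval_X]; rfl

lemma psi_aeval (a : Polynomial k) :
    ψ g₂ g₃ (Polynomial.aeval (xbar g₂ g₃) a) = AdjoinRoot.of (q g₂ g₃) a := by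
  rw [← Polynomial.aeval_algHom_apply, psi_xbar]
  rw [show AdjoinRoot.of (q g₂ g₃) Polynomial.X
      = (IsScalarTower.toAlgHom k (Polynomial k) (AdjoinRoot (q g₂ g₃))) Polynomial.X from rfl]
  rw [Polynomial.aeval_algHom_apply, Polynomial.aeval_X_left_apply]
  rfl

lemma A_rep_zero (a b : Polynomial k)
    (h : Polynomial.aeval (xbar g₂ g₃) a + Polynomial.aeval (xbar g₂ g₃) b * ybar g₂ g₃ = 0) :
    a = 0 ∧ b = 0 := by
  have h2 := congrArg (ψ g₂ g₃) h
  rw [map_add, map_mul, map_zero, psi_aeval, psi_aeval, psi_ybar] at h2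
  exact AR_rep_zero g₂ g₃ h2

lemma y_reg {w : EllipticRing k g₂ g₃} (h : ybar g₂ g₃ * w = 0) : w = 0 := by
  obtain ⟨a, b, rfl⟩ := A_rep g₂ g₃ w
  have h2 : Polynomial.aeval (xbar g₂ g₃) (F g₂ g₃ * b)
      + Polynomial.aeval (xbar g₂ g₃) a * ybar g₂ g₃ = 0 := by
    rw [← h, map_mul]
    linear_combination -(Polynomial.aeval (xbar g₂ g₃) b) * hy2 g₂ g₃
  obtain ⟨hFb, ha⟩ := A_rep_zero g₂ g₃ _ _ h2
  have hb : b = 0 := by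
    rcases mul_eq_zero.mp hFb with h' | h'
    · exact absurd h' (F_ne_zero g₂ g₃)
    · exact h'
  rw [ha, hb]
  simp







noncomputable def Dpre : Derivation k (MvPolynomial (Fin 2) k) (EllipticRing k g₂ g₃) :=
  MvPolynomial.mkDerivation k
    ![2 * ybar g₂ g₃, Polynomial.aeval (xbar g₂ g₃) (Polynomial.derivative (F g₂ g₃))]

omit [CharZero k] in
lemma smul_quot (p : MvPolynomial (Fin 2) k) (w : EllipticRing k g₂ g₃) :
    p • w = Ideal.Quotient.mk (Ideal.span {ellipticRel k g₂ g₃}) p * w := rfl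

lemma Dpre_X0 : Dpre g₂ g₃ (X 0) = 2 * ybar g₂ g₃ := by
  rw [Dpre, mkDerivation_X]; rfl

lemma Dpre_X1 : Dpre g₂ g₃ (X 1)
    = Polynomial.aeval (xbar g₂ g₃) (Polynomial.derivative (F g₂ g₃)) := by
  rw [Dpre, mkDerivation_X]; rfl

lemma Dpre_rel : Dpre g₂ g₃ (ellipticRel k g₂ g₃) = 0 := by
  have hF' : Polynomial.aeval (xbar g₂ g₃) (Polynomial.derivative (F g₂ g₃))
      = 12 * (xbar g₂ g₃) ^ 2 - algebraMap k (EllipticRing k g₂ g₃) g₂ := by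
    rw [derivF]
    simp [map_sub, map_mul, map_pow, Polynomial.aeval_X, Polynomial.aeval_C, map_ofNat]
  have hX0 : Ideal.Quotient.mk (Ideal.span {ellipticRel k g₂ g₃}) (X 0) = xbar g₂ g₃ := rfl
  have hX1 : Ideal.Quotient.mk (Ideal.span {ellipticRel k g₂ g₃}) (X 1) = ybar g₂ g₃ := rfl
  have hC : ∀ c : k, Ideal.Quotient.mk (Ideal.span {ellipticRel k g₂ g₃}) (C c)
      = algebraMap k (EllipticRing k g₂ g₃) c := fun _ => rfl
  show Dpre g₂ g₃ (X 1 ^ 2 - (4 * X 0 ^ 3 - C g₂ * X 0 - C g₃)) = 0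
  have hD4 : Dpre g₂ g₃ 4 = 0 := by
    rw [show ((4 : MvPolynomial (Fin 2) k)) = C (4 : k) from
      (map_ofNat (C : k →+* MvPolynomial (Fin 2) k) 4).symm]
    exact MvPolynomial.derivation_C _ _
  simp only [hD4, map_sub, Derivation.leibniz, Derivation.leibniz_pow, MvPolynomial.derivation_C,
    smul_quot, smul_zero, mul_zero, add_zero, zero_add, nsmul_eq_mul, Nat.reduceSub, pow_one,
    map_pow, hX0, hX1, hC, Dpre_X0, Dpre_X1, hF', map_ofNat]
  push_cast
  ring

lemma Dpre_ker : ∀ p ∈ (Ideal.span {ellipticRel k g₂ g₃}).restrictScalars k,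
    (Dpre g₂ g₃).toLinearMap p = 0 := by
  intro p hp
  rw [Submodule.restrictScalars_mem, Ideal.mem_span_singleton] at hp
  obtain ⟨c, rfl⟩ := hp
  show Dpre g₂ g₃ (ellipticRel k g₂ g₃ * c) = 0
  rw [Derivation.leibniz, Dpre_rel, smul_zero, smul_quot, mk_rel_zero, zero_mul, add_zero]

noncomputable def Dlin : EllipticRing k g₂ g₃ →ₗ[k] EllipticRing k g₂ g₃ :=
  (Submodule.liftQ ((Ideal.span {ellipticRel k g₂ g₃}).restrictScalars k)
    (Dpre g₂ g₃).toLinearMap (fun p hp => Dpre_ker g₂ g₃ p hp)) ∘ₗ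
    (Submodule.Quotient.restrictScalarsEquiv k
      (Ideal.span {ellipticRel k g₂ g₃})).symm.toLinearMap

lemma Dlin_mk (p : MvPolynomial (Fin 2) k) :
    Dlin g₂ g₃ (Ideal.Quotient.mk (Ideal.span {ellipticRel k g₂ g₃}) p) = Dpre g₂ g₃ p := rfl

noncomputable def Dbar : Derivation k (EllipticRing k g₂ g₃) (EllipticRing k g₂ g₃) where
  toLinearMap := Dlin g₂ g₃
  map_one_eq_zero' := by
    show Dlin g₂ g₃ 1 = 0
    rw [show (1 : EllipticRing k g₂ g₃)
      = Ideal.Quotient.mk (Ideal.span {ellipticRel k g₂ g₃}) 1 from rfl, Dlin_mk]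
    exact (Dpre g₂ g₃).map_one_eq_zero
  leibniz' := by
    intro a b
    obtain ⟨p, rfl⟩ := Ideal.Quotient.mk_surjective a
    obtain ⟨p', rfl⟩ := Ideal.Quotient.mk_surjective b
    show Dlin g₂ g₃ _ = _ • Dlin g₂ g₃ _ + _ • Dlin g₂ g₃ _
    rw [← map_mul, Dlin_mk, Dlin_mk, Dlin_mk, Derivation.leibniz, smul_quot, smul_quot,
      smul_eq_mul, smul_eq_mul]

lemma Dbar_apply (p : MvPolynomial (Fin 2) k) :
    Dbar g₂ g₃ (Ideal.Quotient.mk (Ideal.span {ellipticRel k g₂ g₃}) p) = Dpre g₂ g₃ p :=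
  Dlin_mk g₂ g₃ p

lemma Dbar_x : Dbar g₂ g₃ (xbar g₂ g₃) = 2 * ybar g₂ g₃ := by
  rw [xbar, Dbar_apply, Dpre_X0]

lemma Dbar_y : Dbar g₂ g₃ (ybar g₂ g₃)
    = Polynomial.aeval (xbar g₂ g₃) (Polynomial.derivative (F g₂ g₃)) := by
  rw [ybar, Dbar_apply, Dpre_X1]



lemma solve (g : EllipticRing k g₂ g₃) (h : Dbar g₂ g₃ g + 2 * g = 0) : g = 0 := by
  obtain ⟨a, b, rfl⟩ := A_rep g₂ g₃ g
  have hax : ∀ p : Polynomial k, Dbar g₂ g₃ (Polynomial.aeval (xbar g₂ g₃) p)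
      = Polynomial.aeval (xbar g₂ g₃) (Polynomial.derivative p) * (2 * ybar g₂ g₃) := by
    intro p
    rw [Derivation.map_aeval, Dbar_x, smul_eq_mul]
  have hkey : Polynomial.aeval (xbar g₂ g₃)
        (b * Polynomial.derivative (F g₂ g₃)
          + Polynomial.C 2 * Polynomial.derivative b * F g₂ g₃ + Polynomial.C 2 * a)
      + Polynomial.aeval (xbar g₂ g₃)
        (Polynomial.C 2 * Polynomial.derivative a + Polynomial.C 2 * b) * ybar g₂ g₃ = 0 := by
    have hD : Dbar g₂ g₃ (Polynomial.aeval (xbar g₂ g₃) a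
          + Polynomial.aeval (xbar g₂ g₃) b * ybar g₂ g₃)
        = Polynomial.aeval (xbar g₂ g₃) (Polynomial.derivative a) * (2 * ybar g₂ g₃)
          + (Polynomial.aeval (xbar g₂ g₃) b
              * Polynomial.aeval (xbar g₂ g₃) (Polynomial.derivative (F g₂ g₃))
            + ybar g₂ g₃
              * (Polynomial.aeval (xbar g₂ g₃) (Polynomial.derivative b) * (2 * ybar g₂ g₃))) := by
      rw [map_add, Derivation.leibniz, hax, hax, Dbar_y, smul_eq_mul, smul_eq_mul]
    rw [← h, hD]
    simp only [map_add, map_mul, Polynomial.aeval_C, map_ofNat]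
    linear_combination (-2 * Polynomial.aeval (xbar g₂ g₃) (Polynomial.derivative b)) * hy2 g₂ g₃
  obtain ⟨h1, h2⟩ := A_rep_zero g₂ g₃ _ _ hkey
  have hb : b = -Polynomial.derivative a := by
    have h3 : Polynomial.C (2:k) * (Polynomial.derivative a + b) = 0 := by linear_combination h2
    rcases mul_eq_zero.mp h3 with h' | h'
    · exact absurd h' (by
        intro hc
        exact two_ne_zero (Polynomial.C_injective (by simpa using hc)))
    · linear_combination h'
  have ha : a = 0 := by
    apply ode g₂ g₃
    rw [hb, Polynomial.derivative_neg] at h1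
    linear_combination h1
  rw [ha] at hb
  rw [ha, hb]
  simp

end EllipticAux

/-- For the twisted two-term complex `0 → A → Ω¹_{A/k} → 0` on the
punctured elliptic curve `A = k[x,y]/(y² - (4x³ - g₂x - g₃))` with twisting parameter
`ω = dx/y` (characterized by `y • ω = dx`), the zeroth twisted cohomology
`H⁰_ω = ker(d_ω : A → Ω¹)` is zero: `dg + g • ω = 0` forces `g = 0`. -/

theorem elliptic_twisted_H0_zero
    {k : Type*} [Field k] [CharZero k] (g₂ g₃ : k)
    (hΔ : g₂ ^ 3 - 27 * g₃ ^ 2 ≠ 0)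
    (x y : EllipticRing k g₂ g₃)
    (hx : x = Ideal.Quotient.mk (Ideal.span {ellipticRel k g₂ g₃}) (X 0))
    (hy : y = Ideal.Quotient.mk (Ideal.span {ellipticRel k g₂ g₃}) (X 1))
    (ω : KaehlerDifferential k (EllipticRing k g₂ g₃))
    -- `ω = dx/y`
    (hω : y • ω = KaehlerDifferential.D k (EllipticRing k g₂ g₃) x) :
    ∀ g : EllipticRing k g₂ g₃,
      KaehlerDifferential.D k (EllipticRing k g₂ g₃) g + g • ω = 0 → g = 0 := by
  intro g hg
  subst hx hy
  have hxx : Ideal.Quotient.mk (Ideal.span {ellipticRel k g₂ g₃}) (X 0)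
      = EllipticAux.xbar g₂ g₃ := rfl
  have hyy : Ideal.Quotient.mk (Ideal.span {ellipticRel k g₂ g₃}) (X 1)
      = EllipticAux.ybar g₂ g₃ := rfl
  rw [hxx] at hω
  rw [hyy] at hω
  have h0 : (EllipticAux.ybar g₂ g₃) • (KaehlerDifferential.D k (EllipticRing k g₂ g₃) g + g • ω)
      = (EllipticAux.ybar g₂ g₃) • (0 : KaehlerDifferential k (EllipticRing k g₂ g₃)) := by rw [hg]
  have a1 := smul_add (EllipticAux.ybar g₂ g₃) (KaehlerDifferential.D k (EllipticRing k g₂ g₃) g) (g • ω)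
  have a2 := smul_smul (EllipticAux.ybar g₂ g₃) g ω
  have a3 := smul_smul g (EllipticAux.ybar g₂ g₃) ω
  rw [a1, smul_zero] at h0
  rw [a2, mul_comm (EllipticAux.ybar g₂ g₃) g, ← a3, hω] at h0
  have h2 := congrArg ((EllipticAux.Dbar g₂ g₃).liftKaehlerDifferential) h0
  simp only [map_add, map_zero, LinearMap.map_smul] at h2
  rw [Derivation.liftKaehlerDifferential_comp_D, Derivation.liftKaehlerDifferential_comp_D] at h2
  rw [smul_eq_mul, smul_eq_mul, EllipticAux.Dbar_x] at h2
  have h3 : EllipticAux.ybar g₂ g₃ * (EllipticAux.Dbar g₂ g₃ g + 2 * g) = 0 := by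
    linear_combination h2
  exact EllipticAux.solve g₂ g₃ g (EllipticAux.y_reg g₂ g₃ h3)
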